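/- Let V be a real normed vector space, N a natural number, and e : Fin N → V a linearly independent family. Consider the translation action Φ(g,x) = x + ∑_i g i • e i of the additive group ℝ^N on V. Then: (i) the action is free, i.e., if x + ∑_i g i • e i = x for some x ∈ V and g : Fin N → ℝ, then g = 0; and (ii) the action is proper in the sequential sense: if a sequence (xₙ) converges to some x in V and the sequence (xₙ + ∑_i gₙ i • e i) converges to some y in V, then the sequence (gₙ) converges in Fin N → ℝ (equivalently, each coordinate sequence gₙ i converges in ℝ). -/

import Mathlib

open Filter Topology

/-- For a linearly independent family `e : Fin N → V` in a real normed vector space,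
the translation action `Φ(g,x) = x + ∑ i, g i • e i` of the additive group `ℝ^N` on `V`
is free, and proper in the sequential sense: convergence of `xₙ` and of `Φ(gₙ, xₙ)`
forces convergence of the group elements `gₙ`. -/
theorem translation_action_free_and_proper
    (V : Type*) [NormedAddCommGroup V] [NormedSpace ℝ V]
    (N : ℕ) (e : Fin N → V) (he : LinearIndependent ℝ e) :
    (∀ (x : V) (g : Fin N → ℝ), x + ∑ i, g i • e i = x → g = 0) ∧
    (∀ (xseq : ℕ → V) (gseq : ℕ → Fin N → ℝ) (x y : V),
      Tendsto xseq atTop (𝓝 x) →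
      Tendsto (fun n => xseq n + ∑ i, gseq n i • e i) atTop (𝓝 y) →
      ∃ g : Fin N → ℝ, Tendsto gseq atTop (𝓝 g)) := by
  have hfree : ∀ (g : Fin N → ℝ), ∑ i, g i • e i = 0 → g = 0 := by
    intro g hg
    funext i
    exact Fintype.linearIndependent_iff.mp he g hg i
  constructor
  · intro x g hx
    apply hfree
    rwa [add_eq_left] at hx
  · intro xseq gseq x y hx hy
    set L : (Fin N → ℝ) →ₗ[ℝ] V := Fintype.linearCombination ℝ e with hL
    have hLapp : ∀ g : Fin N → ℝ, L g = ∑ i, g i • e i := fun g => by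
      simp [hL, Fintype.linearCombination_apply]
    have hinj : Function.Injective L := by
      rw [← LinearMap.ker_eq_bot, LinearMap.ker_eq_bot']
      intro g hg
      exact hfree g (by rw [← hLapp]; exact hg)
    have hLcont : Continuous L := LinearMap.continuous_of_finiteDimensional L
    -- L gseq n → y - x
    have htend : Tendsto (fun n => L (gseq n)) atTop (𝓝 (y - x)) := by
      have : (fun n => L (gseq n)) =
          fun n => (xseq n + ∑ i, gseq n i • e i) - xseq n := by
        funext n; rw [hLapp]; abel
      rw [this]
      exact hy.sub hx
    -- range L is closed
    have hclosed : IsClosed (LinearMap.range L : Set V) :=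
      Submodule.closed_of_finiteDimensional _
    have hmem : y - x ∈ LinearMap.range L := by
      refine hclosed.mem_of_tendsto htend ?_
      exact Eventually.of_forall fun n => ⟨gseq n, rfl⟩
    -- the linear equiv onto the range, a homeomorphism
    let eL : (Fin N → ℝ) ≃ₗ[ℝ] LinearMap.range L := LinearEquiv.ofInjective L hinj
    let eC : (Fin N → ℝ) ≃L[ℝ] LinearMap.range L := eL.toContinuousLinearEquiv
    refine ⟨eC.symm ⟨y - x, hmem⟩, ?_⟩
    have htend' : Tendsto (fun n => (⟨L (gseq n), ⟨gseq n, rfl⟩⟩ :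
        LinearMap.range L)) atTop (𝓝 ⟨y - x, hmem⟩) := by
      rw [IsEmbedding.subtypeVal.tendsto_nhds_iff]
      exact htend
    have : Tendsto (fun n => eC.symm (⟨L (gseq n), ⟨gseq n, rfl⟩⟩ :
        LinearMap.range L)) atTop (𝓝 (eC.symm ⟨y - x, hmem⟩)) :=
      (eC.symm.continuous.tendsto _).comp htend'
    convert this using 2 with n
    have : (⟨L (gseq n), ⟨gseq n, rfl⟩⟩ : LinearMap.range L) = eC (gseq n) := rfl
    rw [this, ContinuousLinearEquiv.symm_apply_apply]
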